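/- arXiv:1307.5154 — 2 statements merged into one kernel-verified Lean document; each statement's English description precedes it below -/
import Mathlib

section
/- Assume zero external field, that 𝚫 is positive definite (det 𝚫 > 0), and that the matrix 𝚫̂ := 𝚫^{−1} − 2𝛂^{−1} is positive definite, where 𝛂 = diag(α^{(s)})_{s∈𝒮}. Then the normalized second moment of the partition function is bounded uniformly in the size: there exists a constant C < ∞, independent of N, such that E[Z_N²] ≤ C (E[Z_N])² for every admissible N. -/
open MeasureTheory ProbabilityTheory Real Filter

noncomputable section

namespace MSSK

/-- The ±1 spin value attached to a Boolean. -/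
def spin (b : Bool) : ℝ := if b then 1 else -1

variable {S : ℕ}

/-- The matrix 𝚫 with entries α_s α_p Δ²_{sp}. -/
def Dmat (α : Fin S → ℝ) (Δsq : Fin S → Fin S → ℝ) : Fin S → Fin S → ℝ :=
  fun s p => α s * α p * Δsq s p

/-- Bilinear form (x, M y) on ℝ^S. -/
def quadForm (M : Fin S → Fin S → ℝ) (x y : Fin S → ℝ) : ℝ :=
  ∑ s, ∑ p, x s * M s p * y p

/-- Positive semi-definiteness of a matrix, expressed via the quadratic form. -/
def PosSemidefQ (M : Fin S → Fin S → ℝ) : Prop := ∀ x : Fin S → ℝ, 0 ≤ quadForm M x x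

/-- Positive definiteness of a matrix, expressed via the quadratic form. -/
def PosDefQ (M : Fin S → Fin S → ℝ) : Prop :=
  ∀ x : Fin S → ℝ, x ≠ 0 → 0 < quadForm M x x

/-- Configuration space: one ±1 spin (coded as a Boolean) for each species `s`
and each site `i < Ns s`. -/
abbrev Conf (S : ℕ) (Ns : Fin S → ℕ) := ∀ s : Fin S, Fin (Ns s) → Bool

/-- The multi-species SK Hamiltonian with disorder values `J`. -/
def hamiltonian (N : ℕ) (Ns : Fin S → ℕ) (J : Fin S → Fin S → ℕ → ℕ → ℝ)
    (σ : Conf S Ns) : ℝ :=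
  -(1 / Real.sqrt N) * ∑ s : Fin S, ∑ p : Fin S, ∑ i : Fin (Ns s), ∑ j : Fin (Ns p),
      J s p i j * spin (σ s i) * spin (σ p j)

/-- External-field part of the energy: Σ_s h^(s) Σ_i σ_i^(s). -/
def fieldTerm (Ns : Fin S → ℕ) (h : Fin S → ℝ) (σ : Conf S Ns) : ℝ :=
  ∑ s : Fin S, h s * ∑ i : Fin (Ns s), spin (σ s i)

/-- The random partition function Z_N (for a fixed disorder realization). -/
def partitionFunction (N : ℕ) (Ns : Fin S → ℕ) (h : Fin S → ℝ)
    (J : Fin S → Fin S → ℕ → ℕ → ℝ) : ℝ :=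
  ∑ σ : Conf S Ns, Real.exp (fieldTerm Ns h σ - hamiltonian N Ns J σ)

/-- The disorder: an i.i.d.-indexed family of independent centered Gaussian couplings,
`J c s p i j` having variance `Δsq s p` (the extra index `c` allows several
independent copies of the disorder). -/
def IsDisorderFam {Ω C : Type} [MeasurableSpace Ω] (μ : Measure Ω)
    (Δsq : Fin S → Fin S → ℝ) (J : C → Fin S → Fin S → ℕ → ℕ → Ω → ℝ) : Prop :=
  (∀ c s p i j, Measurable (J c s p i j)) ∧
  iIndepFun
    (fun k : C × (Fin S × Fin S) × ℕ × ℕ => J k.1 k.2.1.1 k.2.1.2 k.2.2.1 k.2.2.2) μ ∧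
  ∀ c s p i j, μ.map (J c s p i j) = gaussianReal 0 (Δsq s p).toNNReal

/-- A single copy of the disorder. -/
def IsDisorder {Ω : Type} [MeasurableSpace Ω] (μ : Measure Ω)
    (Δsq : Fin S → Fin S → ℝ) (J : Fin S → Fin S → ℕ → ℕ → Ω → ℝ) : Prop :=
  IsDisorderFam μ Δsq (fun _ : Unit => J)

/-- Size of the block of species `s` at total size `N` (equal to α_s N at admissible sizes). -/
def blockSize (α : Fin S → ℝ) (N : ℕ) (s : Fin S) : ℕ := ⌊α s * N⌋₊

/-- `N` is admissible when every `α_s N` is a positive integer. -/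
def Admissible (α : Fin S → ℝ) (N : ℕ) : Prop :=
  ∀ s, 0 < blockSize α N s ∧ (blockSize α N s : ℝ) = α s * N

/-- The quenched pressure density p_N = N⁻¹ E log Z_N. -/
def pDensity {Ω : Type} [MeasurableSpace Ω] (μ : Measure Ω) (α : Fin S → ℝ)
    (h : Fin S → ℝ) (J : Fin S → Fin S → ℕ → ℕ → Ω → ℝ) (N : ℕ) : ℝ :=
  (1 / (N : ℝ)) *
    ∫ ω, Real.log (partitionFunction N (blockSize α N) h (fun s p i j => J s p i j ω)) ∂μ

/-- Overlap vector of two configurations. -/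
def overlap (Ns : Fin S → ℕ) (σ τ : Conf S Ns) : Fin S → ℝ :=
  fun s => (1 / (Ns s : ℝ)) * ∑ i : Fin (Ns s), spin (σ s i) * spin (τ s i)

/-- Magnetization vector of a configuration. -/
def mag (Ns : Fin S → ℕ) (τ : Conf S Ns) : Fin S → ℝ :=
  fun s => (1 / (Ns s : ℝ)) * ∑ i : Fin (Ns s), spin (τ s i)

/-- Restriction of a configuration to the first sub-block. -/
def restrict1 (Ns Ns1 Ns2 : Fin S → ℕ) (hsum : ∀ s, Ns s = Ns1 s + Ns2 s)
    (σ : Conf S Ns) : Conf S Ns1 :=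
  fun s i => σ s (Fin.cast (hsum s).symm (Fin.castAdd (Ns2 s) i))

/-- Restriction of a configuration to the second (last) sub-block. -/
def restrict2 (Ns Ns1 Ns2 : Fin S → ℕ) (hsum : ∀ s, Ns s = Ns1 s + Ns2 s)
    (σ : Conf S Ns) : Conf S Ns2 :=
  fun s i => σ s (Fin.cast (hsum s).symm (Fin.natAdd (Ns1 s) i))

/-- Gibbs weight associated to an energy function `H` (which already includes the
minus sign convention: the weight is exp(field − H)). -/
def gibbs (Ns : Fin S → ℕ) (h : Fin S → ℝ) (H : Conf S Ns → ℝ) (σ : Conf S Ns) : ℝ :=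
  Real.exp (fieldTerm Ns h σ - H σ) / ∑ τ : Conf S Ns, Real.exp (fieldTerm Ns h τ - H τ)

end MSSK

namespace MSSK

/-- The matrix 𝚫̂ = 𝚫⁻¹ − 2𝛂⁻¹, with 𝛂 = diag(α_s). -/
def Dhat {S : ℕ} (α : Fin S → ℝ) (Δsq : Fin S → Fin S → ℝ) : Fin S → Fin S → ℝ :=
  fun s p => (Matrix.of (Dmat α Δsq))⁻¹ s p - (if s = p then 2 / α s else 0)



open scoped NNReal ENNReal
open Matrix
open scoped MatrixOrder

variable {S : ℕ}

lemma pdf_mul_exp (v : ℝ≥0) (hv : v ≠ 0) (t x : ℝ) :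
    gaussianPDFReal 0 v x * exp (t * x) = exp ((v:ℝ) * t ^ 2 / 2) * gaussianPDFReal ((v:ℝ) * t) v x := by
  have hv' : (0:ℝ) < (v:ℝ) := by positivity
  simp only [gaussianPDFReal]
  rw [mul_assoc, ← Real.exp_add, mul_left_comm, ← Real.exp_add]
  congr 1
  field_simp
  ring

lemma gaussianReal_withDensity (v : ℝ≥0) (hv : v ≠ 0) (m : ℝ) :
    gaussianReal m v
      = volume.withDensity (fun x => ((gaussianPDFReal m v x).toNNReal : ℝ≥0∞)) := by
  rw [gaussianReal_of_var_ne_zero _ hv]; rfl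

lemma integrable_exp_mul_gaussianReal (v : ℝ≥0) (t : ℝ) :
    Integrable (fun x => exp (t * x)) (gaussianReal 0 v) := by
  by_cases hv : v = 0
  · rw [hv, gaussianReal_zero_var]
    have : (fun x : ℝ => exp (t * x)) =ᵐ[Measure.dirac (0:ℝ)] fun _ => exp (t * 0) := by
      rw [Filter.EventuallyEq, ae_dirac_iff (measurableSet_eq_fun (by fun_prop) measurable_const)]
    exact (integrable_const _).congr this.symm
  · rw [gaussianReal_withDensity v hv]
    rw [integrable_withDensity_iff_integrable_smul
      ((measurable_gaussianPDFReal 0 v).real_toNNReal)]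
    have : (fun x => ((gaussianPDFReal 0 v x).toNNReal : ℝ≥0) • exp (t * x))
        = fun x => exp ((v:ℝ) * t ^ 2 / 2) * gaussianPDFReal ((v:ℝ) * t) v x := by
      funext x
      rw [NNReal.smul_def, Real.coe_toNNReal _ (gaussianPDFReal_nonneg 0 v x)]
      exact pdf_mul_exp v hv t x
    rw [this]
    exact (integrable_gaussianPDFReal _ _).const_mul _

lemma integral_exp_mul_gaussianReal (v : ℝ≥0) (t : ℝ) :
    ∫ x, exp (t * x) ∂(gaussianReal 0 v) = exp ((v:ℝ) * t ^ 2 / 2) := by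
  by_cases hv : v = 0
  · simp [hv]
  · rw [gaussianReal_withDensity v hv,
      integral_withDensity_eq_integral_smul ((measurable_gaussianPDFReal 0 v).real_toNNReal)]
    have : (fun x => ((gaussianPDFReal 0 v x).toNNReal : ℝ≥0) • exp (t * x))
        = fun x => exp ((v:ℝ) * t ^ 2 / 2) * gaussianPDFReal ((v:ℝ) * t) v x := by
      funext x
      rw [NNReal.smul_def, Real.coe_toNNReal _ (gaussianPDFReal_nonneg 0 v x)]
      exact pdf_mul_exp v hv t x
    rw [this, integral_const_mul, integral_gaussianPDFReal_eq_one _ hv, mul_one]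

lemma integrable_exp_mul_pdf (a : ℝ) :
    Integrable (fun x => exp (a * x) * gaussianPDFReal 0 1 x) := by
  have := (integrable_gaussianPDFReal ((1:ℝ≥0) * a) 1).const_mul (exp ((1:ℝ≥0) * a ^ 2 / 2))
  refine this.congr ?_
  filter_upwards with x
  rw [← pdf_mul_exp 1 one_ne_zero a x, mul_comm]

lemma integral_exp_mul_pdf (a : ℝ) :
    ∫ x, exp (a * x) * gaussianPDFReal 0 1 x = exp (a ^ 2 / 2) := by
  have : (fun x => exp (a * x) * gaussianPDFReal 0 1 x)
      = fun x => exp (((1:ℝ≥0):ℝ) * a ^ 2 / 2) * gaussianPDFReal (((1:ℝ≥0):ℝ) * a) 1 x := by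
    funext x; rw [← pdf_mul_exp 1 one_ne_zero a x, mul_comm]
  rw [this, integral_const_mul, integral_gaussianPDFReal_eq_one _ one_ne_zero, mul_one]
  norm_num

lemma integrable_exp_sq_pdf (l : ℝ) (hl : l < 1/2) :
    Integrable (fun x => exp (l * x ^ 2) * gaussianPDFReal 0 1 x) := by
  have h : (0:ℝ) < 1/2 - l := by linarith
  have heq : (fun x => exp (l * x ^ 2) * gaussianPDFReal 0 1 x)
      = fun x => (√(2 * π * ((1:ℝ≥0):ℝ)))⁻¹ * exp (-(1/2 - l) * x ^ 2) := by
    funext x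
    simp only [gaussianPDFReal]
    rw [mul_comm, mul_assoc, ← Real.exp_add]
    congr 2
    push_cast
    ring
  rw [heq]
  exact (integrable_exp_neg_mul_sq h).const_mul _


lemma spin_mul_self (b : Bool) : spin b * spin b = 1 := by cases b <;> simp [spin]

lemma sum_conf_prod (n : Fin S → ℕ) (F : ∀ s : Fin S, Fin (n s) → Bool → ℝ) :
    ∑ τ : Conf S n, ∏ s, ∏ i, F s i (τ s i) = ∏ s, ∏ i, (F s i true + F s i false) := by
  classical
  have h1 : ∀ s : Fin S, ∏ i, (F s i true + F s i false)
      = ∑ gs ∈ Fintype.piFinset (fun _ : Fin (n s) => (Finset.univ : Finset Bool)),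
          ∏ i, F s i (gs i) := by
    intro s
    rw [← Finset.prod_univ_sum]
    exact Finset.prod_congr rfl fun i _ => by
      rw [Fintype.sum_bool]
  refine Eq.symm ?_
  calc ∏ s, ∏ i, (F s i true + F s i false)
      = ∏ s, ∑ gs ∈ Fintype.piFinset (fun _ : Fin (n s) => (Finset.univ : Finset Bool)),
          ∏ i, F s i (gs i) := Finset.prod_congr rfl fun s _ => h1 s
    _ = ∑ τ ∈ Fintype.piFinset
          (fun s : Fin S => Fintype.piFinset (fun _ : Fin (n s) => (Finset.univ : Finset Bool))),
          ∏ s, ∏ i, F s i (τ s i) := Finset.prod_univ_sum _ _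
    _ = ∑ τ : Conf S n, ∏ s, ∏ i, F s i (τ s i) := by
        simp only [Fintype.piFinset_univ]

lemma pair_exp_sum (u : Bool) (c : ℝ) :
    exp (c * (spin u * spin true)) + exp (c * (spin u * spin false)) = exp c + exp (-c) := by
  cases u <;> simp [spin] <;> rw [add_comm] <;> norm_num

lemma exp_add_exp_neg_le (c : ℝ) : exp c + exp (-c) ≤ 2 * exp (c^2/2) := by
  have h := Real.cosh_le_exp_half_sq c
  rw [Real.cosh_eq] at h
  linarith

lemma card_conf (n : Fin S → ℕ) :
    (Fintype.card (Conf S n) : ℝ) = ∏ s, (2:ℝ)^(n s) := by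
  rw [Fintype.card_pi]
  push_cast
  refine Finset.prod_congr rfl fun s _ => ?_
  rw [Fintype.card_fun]
  push_cast
  simp


lemma quadForm_dot (M : Fin S → Fin S → ℝ) (x y : Fin S → ℝ) :
    quadForm M x y = x ⬝ᵥ (Matrix.of M *ᵥ y) := by
  simp only [quadForm, dotProduct, Matrix.mulVec, Matrix.of_apply, Finset.mul_sum]
  exact Finset.sum_congr rfl fun s _ => Finset.sum_congr rfl fun p _ => by ring

lemma linalg (hS : 0 < S) (α : Fin S → ℝ) (Δsq : Fin S → Fin S → ℝ)
    (hαpos : ∀ s, 0 < α s) (hΔsym : ∀ s p, Δsq s p = Δsq p s)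
    (hpd : PosDefQ (Dmat α Δsq)) (hdet : 0 < (Matrix.of (Dmat α Δsq)).det)
    (hhat : PosDefQ (Dhat α Δsq)) :
    ∃ (B : Matrix (Fin S) (Fin S) ℝ) (lam : ℝ), lam < 1/2 ∧
      (∀ R : Fin S → ℝ, quadForm (Dmat α Δsq) R R = ∑ s, ((B *ᵥ R) s)^2) ∧
      (∀ g : Fin S → ℝ, ∑ p, ((B *ᵥ g) p)^2 / α p ≤ lam * ∑ s, (g s)^2) ∧
      (∀ g R : Fin S → ℝ, ∑ s, g s * (B *ᵥ R) s = ∑ p, (B *ᵥ g) p * R p) := by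
  classical
  set D : Matrix (Fin S) (Fin S) ℝ := Matrix.of (Dmat α Δsq) with hD
  have hherm : D.IsHermitian := by
    ext s p
    simp only [Matrix.conjTranspose_apply, Matrix.of_apply, hD, star_trivial, Dmat]
    rw [hΔsym p s]; ring
  have hDpos : D.PosDef := by
    refine Matrix.PosDef.of_dotProduct_mulVec_pos hherm fun x hx => ?_
    have := hpd x hx
    rw [quadForm_dot, ← hD] at this
    simpa only [star_trivial] using this
  have hpsd := hDpos.posSemidef
  set B : Matrix (Fin S) (Fin S) ℝ := CFC.sqrt D with hB
  have hBB : B * B = D := CFC.sqrt_mul_sqrt_self D hpsd.nonneg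
  have hBherm : B.IsHermitian := (CFC.sqrt_nonneg D).posSemidef.1
  have hBsym : Bᵀ = B := by
    have := hBherm
    rwa [Matrix.IsHermitian, Matrix.conjTranspose] at this

  have hdetB : B.det ≠ 0 := by
    intro h0
    have : D.det = B.det * B.det := by rw [← hBB, Matrix.det_mul]
    rw [this, h0, mul_zero] at hdet
    exact lt_irrefl _ hdet
  have hUnitB : IsUnit B.det := isUnit_iff_ne_zero.mpr hdetB
  have hBinvB : B⁻¹ * B = 1 := Matrix.nonsing_inv_mul B hUnitB
  have hBBinv : B * B⁻¹ = 1 := Matrix.mul_nonsing_inv B hUnitB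
  have hBDB : B * D⁻¹ * B = 1 := by
    rw [← hBB, Matrix.mul_inv_rev]
    calc B * (B⁻¹ * B⁻¹) * B = (B * B⁻¹) * (B⁻¹ * B) := by
          simp only [Matrix.mul_assoc]
      _ = 1 := by rw [hBBinv, hBinvB, Matrix.one_mul]
  have hvm : ∀ v : Fin S → ℝ, v ᵥ* B = B *ᵥ v := by
    intro v
    calc v ᵥ* B = v ᵥ* Bᵀ := by rw [hBsym]
      _ = B *ᵥ v := Matrix.vecMul_transpose B v
  -- symmetric conjugation identity
  have hconj : ∀ (M : Matrix (Fin S) (Fin S) ℝ) (g : Fin S → ℝ),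
      (B *ᵥ g) ⬝ᵥ (M *ᵥ (B *ᵥ g)) = g ⬝ᵥ ((B * M * B) *ᵥ g) := by
    intro M g
    rw [← Matrix.mulVec_mulVec, ← Matrix.mulVec_mulVec, Matrix.dotProduct_mulVec g B, hvm]
  have hquad : ∀ R : Fin S → ℝ, quadForm (Dmat α Δsq) R R = ∑ s, ((B *ᵥ R) s)^2 := by
    intro R
    rw [quadForm_dot, ← hD, ← hBB, ← Matrix.mulVec_mulVec, Matrix.dotProduct_mulVec R B, hvm]
    simp [dotProduct, sq]
  have hswap : ∀ g R : Fin S → ℝ, ∑ s, g s * (B *ᵥ R) s = ∑ p, (B *ᵥ g) p * R p := by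
    intro g R
    have h1 : g ⬝ᵥ (B *ᵥ R) = (g ᵥ* B) ⬝ᵥ R := Matrix.dotProduct_mulVec g B R
    rw [hvm, dotProduct, dotProduct] at h1
    exact h1
  -- the quadratic functional
  set f : (Fin S → ℝ) → ℝ := fun g => ∑ p, ((B *ᵥ g) p)^2 / α p with hf
  have hfnonneg : ∀ g, 0 ≤ f g := by
    intro g
    refine Finset.sum_nonneg fun p _ => div_nonneg (sq_nonneg _) (hαpos p).le
  have hfcont : Continuous f := by
    simp only [hf, Matrix.mulVec, dotProduct]
    exact continuous_finset_sum _ fun p _ =>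
      ((continuous_finset_sum _ fun q _ => continuous_const.mul (continuous_apply q)).pow 2).div_const _
  have hfscale : ∀ (c : ℝ) (g : Fin S → ℝ), f (c • g) = c^2 * f g := by
    intro c g
    simp only [hf, Matrix.mulVec_smul, Pi.smul_apply, smul_eq_mul, Finset.mul_sum]
    exact Finset.sum_congr rfl fun p _ => by ring
  -- Euclidean space
  let E := EuclideanSpace ℝ (Fin S)
  let e : E → (Fin S → ℝ) := WithLp.equiv 2 (Fin S → ℝ)
  have he : Continuous e := PiLp.continuous_ofLp 2 (fun _ : Fin S => ℝ)
  have hfE : Continuous (fun g : E => f (e g)) := hfcont.comp he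
  have hx0 : (EuclideanSpace.single (⟨0, hS⟩ : Fin S) (1:ℝ) : E) ∈ Metric.sphere (0:E) 1 := by
    rw [mem_sphere_zero_iff_norm, EuclideanSpace.norm_single]
    simp
  obtain ⟨g₀, hg₀S, hmax⟩ := ((isCompact_sphere (0:E) 1).exists_isMaxOn ⟨_, hx0⟩ hfE.continuousOn)
  set lam : ℝ := f (e g₀) with hlam
  have hg₀norm : ‖g₀‖ = 1 := mem_sphere_zero_iff_norm.mp hg₀S
  have hnormsq : ∀ g : E, (∑ s, (e g s)^2) = ‖g‖^2 := by
    intro g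
    rw [EuclideanSpace.norm_eq, Real.sq_sqrt (Finset.sum_nonneg fun s _ => sq_nonneg _)]
    exact Finset.sum_congr rfl fun s _ => by
      rw [Real.norm_eq_abs, sq_abs]; rfl
  have hg₀sum : (∑ s, (e g₀ s)^2) = 1 := by rw [hnormsq, hg₀norm, one_pow]
  -- lam < 1/2
  have hlamlt : lam < 1/2 := by
    have hg₀ne : e g₀ ≠ 0 := by
      intro h0
      have : (∑ s, (e g₀ s)^2) = 0 := by rw [h0]; simp
      rw [hg₀sum] at this; norm_num at this
    set x : Fin S → ℝ := B *ᵥ (e g₀) with hx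
    have hxne : x ≠ 0 := by
      intro h0
      apply hg₀ne
      have : B⁻¹ *ᵥ x = B⁻¹ *ᵥ 0 := by rw [h0]
      rwa [hx, Matrix.mulVec_mulVec, hBinvB, Matrix.one_mulVec, Matrix.mulVec_zero] at this
    have hpos := hhat x hxne
    have h1 : x ⬝ᵥ (D⁻¹ *ᵥ x) = ∑ s, ∑ p, x s * D⁻¹ s p * x p := by
      simp only [dotProduct, Matrix.mulVec, Finset.mul_sum]
      exact Finset.sum_congr rfl fun s _ => Finset.sum_congr rfl fun p _ => by ring
    have hsplit : quadForm (Dhat α Δsq) x x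
        = x ⬝ᵥ (D⁻¹ *ᵥ x) - 2 * ∑ s, (x s)^2 / α s := by
      calc quadForm (Dhat α Δsq) x x
          = ∑ s, ∑ p, (x s * D⁻¹ s p * x p
              - x s * (if s = p then 2/α s else 0) * x p) := by
            simp only [quadForm, Dhat, ← hD]
            exact Finset.sum_congr rfl fun s _ => Finset.sum_congr rfl fun p _ => by ring
        _ = (∑ s, ∑ p, x s * D⁻¹ s p * x p)
              - ∑ s, ∑ p, x s * (if s = p then 2/α s else 0) * x p := by
            rw [← Finset.sum_sub_distrib]
            exact Finset.sum_congr rfl fun s _ => Finset.sum_sub_distrib _ _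
        _ = x ⬝ᵥ (D⁻¹ *ᵥ x) - 2 * ∑ s, (x s)^2 / α s := by
            rw [h1]
            congr 1
            rw [Finset.mul_sum]
            refine Finset.sum_congr rfl fun s _ => ?_
            rw [Finset.sum_eq_single s]
            · rw [if_pos rfl]; ring
            · intro p _ hp
              rw [if_neg fun h => hp h.symm]
              ring
            · intro h; exact absurd (Finset.mem_univ s) h
    have hxDx : x ⬝ᵥ (D⁻¹ *ᵥ x) = 1 := by
      rw [hx, hconj D⁻¹, hBDB, Matrix.one_mulVec]
      have := hg₀sum
      simp only [sq] at this
      simpa [dotProduct] using this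
    have hfx : ∑ s, (x s)^2 / α s = lam := by simp [hlam, hf, hx]
    rw [hsplit, hxDx, hfx] at hpos
    linarith
  -- the bound
  have hbound : ∀ g : Fin S → ℝ, f g ≤ lam * ∑ s, (g s)^2 := by
    intro g
    by_cases hg : g = 0
    · subst hg
      simp only [hf, Matrix.mulVec_zero, Pi.zero_apply]
      simp
    · set gE : E := (WithLp.equiv 2 (Fin S → ℝ)).symm g with hgEdef
      have hgE : e gE = g := (WithLp.equiv 2 (Fin S → ℝ)).apply_symm_apply g
      have hgEne : gE ≠ 0 := by
        intro h0
        apply hg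
        rw [← hgE, h0]
        rfl
      have hrpos : (0:ℝ) < ‖gE‖ := norm_pos_iff.mpr hgEne
      set r : ℝ := ‖gE‖ with hrdef
      have hu : r⁻¹ • gE ∈ Metric.sphere (0:E) 1 := by
        rw [mem_sphere_zero_iff_norm, norm_smul, Real.norm_eq_abs, abs_inv,
          abs_of_pos hrpos, ← hrdef, inv_mul_cancel₀ hrpos.ne']
      have h2 : f (e (r⁻¹ • gE)) ≤ lam := hmax hu
      have he_smul : e (r⁻¹ • gE) = r⁻¹ • g := by
        rw [← hgE]; rfl
      rw [he_smul, hfscale] at h2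
      have hr2 : (0:ℝ) < r^2 := by positivity
      have hg2 : ∑ s, (g s)^2 = r^2 := by
        rw [← hgE, hnormsq gE, hrdef]
      rw [hg2]
      calc f g = r^2 * ((r⁻¹)^2 * f g) := by field_simp
        _ ≤ r^2 * lam := mul_le_mul_of_nonneg_left h2 hr2.le
        _ = lam * r^2 := mul_comm _ _
  exact ⟨B, lam, hlamlt, hquad, hbound, hswap⟩



lemma admissible_pos {α : Fin S → ℝ} {N : ℕ} (hS : 0 < S) (h : Admissible α N) : 0 < N := by
  rcases Nat.eq_zero_or_pos N with h0 | h1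
  · exfalso
    have := (h ⟨0, hS⟩).1
    rw [h0] at this
    simp [blockSize] at this
  · exact h1

lemma partB (hS : 0 < S) (α : Fin S → ℝ) (Δsq : Fin S → Fin S → ℝ)
    (hαpos : ∀ s, 0 < α s) (hαsum : ∑ s, α s = 1)
    (hΔsym : ∀ s p, Δsq s p = Δsq p s)
    (hpd : PosDefQ (Dmat α Δsq)) (hdet : 0 < (Matrix.of (Dmat α Δsq)).det)
    (hhat : PosDefQ (Dhat α Δsq)) :
    ∃ C₀ : ℝ, ∀ N : ℕ, Admissible α N →
      ∑ q : Conf S (blockSize α N) × Conf S (blockSize α N),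
        Real.exp ((N:ℝ) * quadForm (Dmat α Δsq) (overlap (blockSize α N) q.1 q.2)
          (overlap (blockSize α N) q.1 q.2))
      ≤ (Fintype.card (Conf S (blockSize α N)) : ℝ)^2 * C₀ := by
  classical
  obtain ⟨B, lam, hlam, hquadB, hbound, hswap⟩ :=
    linalg hS α Δsq hαpos hΔsym hpd hdet hhat
  refine ⟨(∫ x, exp (lam * x ^ 2) * gaussianPDFReal 0 1 x) ^ S, ?_⟩
  intro N hadm
  set n : Fin S → ℕ := blockSize α N with hndef
  have hNpos : 0 < N := admissible_pos hS hadm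
  have hNR : (0:ℝ) < N := by exact_mod_cast hNpos
  have hn : ∀ s, (n s : ℝ) = α s * N := fun s => (hadm s).2
  have hnposR : ∀ s, (0:ℝ) < (n s : ℝ) := by
    intro s; exact_mod_cast (hadm s).1
  set K : ℝ := (Fintype.card (Conf S n) : ℝ) with hKdef
  have hKprod : K = ∏ s, (2:ℝ)^(n s) := card_conf n
  have h2N : Real.sqrt (2 * N) ^ 2 = 2 * N := Real.sq_sqrt (by positivity)
  -- the linearization coefficients
  set a : Conf S n × Conf S n → Fin S → ℝ :=
    fun q s => Real.sqrt (2 * N) * (B *ᵥ overlap n q.1 q.2) s with hadef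
  set G : Conf S n × Conf S n → (Fin S → ℝ) → ℝ :=
    fun q g => ∏ s, exp (a q s * g s) * gaussianPDFReal 0 1 (g s) with hGdef
  have hGint : ∀ q, Integrable (G q) :=
    fun q => Integrable.fintype_prod (fun s => integrable_exp_mul_pdf (a q s))
  have hGval : ∀ q, ∫ g, G q g
      = exp ((N:ℝ) * quadForm (Dmat α Δsq) (overlap n q.1 q.2) (overlap n q.1 q.2)) := by
    intro q
    rw [hGdef]
    rw [MeasureTheory.integral_fintype_prod_volume_eq_prod
      (fun s x => exp (a q s * x) * gaussianPDFReal 0 1 x)]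
    have : ∀ s ∈ Finset.univ, (∫ x, exp (a q s * x) * gaussianPDFReal 0 1 x)
        = exp (a q s ^ 2 / 2) := fun s _ => integral_exp_mul_pdf (a q s)
    rw [Finset.prod_congr rfl this, ← Real.exp_sum]
    congr 1
    rw [hquadB, Finset.mul_sum]
    refine Finset.sum_congr rfl fun s _ => ?_
    rw [hadef, mul_pow, h2N]
    ring
  -- pointwise bound
  have key : ∀ g : Fin S → ℝ, ∑ q : Conf S n × Conf S n, G q g
      ≤ K^2 * ∏ s, exp (lam * (g s)^2) * gaussianPDFReal 0 1 (g s) := by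
    intro g
    set W : ℝ := ∏ s, gaussianPDFReal 0 1 (g s) with hWdef
    have hWnn : 0 ≤ W := Finset.prod_nonneg fun s _ => gaussianPDFReal_nonneg _ _ _
    set c : Fin S → ℝ := fun p => Real.sqrt (2 * N) * (B *ᵥ g) p / (n p) with hcdef
    have hG_eq : ∀ q, G q g
        = exp (∑ p, c p * ∑ i : Fin (n p), spin (q.1 p i) * spin (q.2 p i)) * W := by
      intro q
      simp only [hGdef]
      rw [Finset.prod_mul_distrib, ← hWdef, ← Real.exp_sum]
      congr 2
      -- ∑ s, a q s * g s = ∑ p, c p * ovl p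
      calc ∑ s, a q s * g s
          = Real.sqrt (2*N) * ∑ s, g s * (B *ᵥ overlap n q.1 q.2) s := by
            rw [Finset.mul_sum]
            exact Finset.sum_congr rfl fun s _ => by rw [hadef]; ring
        _ = Real.sqrt (2*N) * ∑ p, (B *ᵥ g) p * overlap n q.1 q.2 p := by rw [hswap]
        _ = ∑ p, c p * ∑ i : Fin (n p), spin (q.1 p i) * spin (q.2 p i) := by
            rw [Finset.mul_sum]
            refine Finset.sum_congr rfl fun p _ => ?_
            rw [hcdef, overlap]
            field_simp
    -- sum over pairs
    have hpair : ∑ q : Conf S n × Conf S n,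
        exp (∑ p, c p * ∑ i : Fin (n p), spin (q.1 p i) * spin (q.2 p i))
        = K * ∏ p, (exp (c p) + exp (-(c p)))^(n p) := by
      rw [Fintype.sum_prod_type]
      have hτ : ∀ σ : Conf S n, ∑ τ : Conf S n,
          exp (∑ p, c p * ∑ i : Fin (n p), spin (σ p i) * spin (τ p i))
          = ∏ p, (exp (c p) + exp (-(c p)))^(n p) := by
        intro σ
        have hexpand : ∀ τ : Conf S n,
            exp (∑ p, c p * ∑ i : Fin (n p), spin (σ p i) * spin (τ p i))
            = ∏ p, ∏ i, exp (c p * (spin (σ p i) * spin (τ p i))) := by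
          intro τ
          rw [Real.exp_sum]
          refine Finset.prod_congr rfl fun p _ => ?_
          rw [← Real.exp_sum, Finset.mul_sum]
        rw [Finset.sum_congr rfl fun τ _ => hexpand τ,
          sum_conf_prod n (fun p i b => exp (c p * (spin (σ p i) * spin b)))]
        refine Finset.prod_congr rfl fun p _ => ?_
        rw [Finset.prod_congr rfl fun i _ => pair_exp_sum (σ p i) (c p)]
        rw [Finset.prod_const, Finset.card_univ, Fintype.card_fin]
      rw [Finset.sum_congr rfl fun σ _ => hτ σ, Finset.sum_const, Finset.card_univ]
      rw [nsmul_eq_mul, hKdef]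
    -- bounding the product
    have hprodle : ∏ p, (exp (c p) + exp (-(c p)))^(n p)
        ≤ K * exp (lam * ∑ s, (g s)^2) := by
      have hstep : ∀ p, (exp (c p) + exp (-(c p)))^(n p)
          ≤ (2:ℝ)^(n p) * exp ((n p : ℝ) * (c p ^2/2)) := by
        intro p
        calc (exp (c p) + exp (-(c p)))^(n p)
            ≤ (2 * exp (c p ^2/2))^(n p) := by
              refine pow_le_pow_left₀ (by positivity) (exp_add_exp_neg_le (c p)) _
          _ = (2:ℝ)^(n p) * exp ((n p : ℝ) * (c p^2/2)) := by
              rw [mul_pow, ← Real.exp_nat_mul]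
      calc ∏ p, (exp (c p) + exp (-(c p)))^(n p)
          ≤ ∏ p, (2:ℝ)^(n p) * exp ((n p : ℝ) * (c p ^2/2)) := by
            refine Finset.prod_le_prod (fun p _ => by positivity) (fun p _ => hstep p)
        _ = K * exp (∑ p, (n p : ℝ) * (c p ^2/2)) := by
            rw [Finset.prod_mul_distrib, ← hKprod, ← Real.exp_sum]
        _ ≤ K * exp (lam * ∑ s, (g s)^2) := by
            have hcsum : ∑ p, (n p : ℝ) * (c p ^2/2) = ∑ p, ((B *ᵥ g) p)^2 / α p := by
              refine Finset.sum_congr rfl fun p _ => ?_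
              rw [hcdef, div_pow, mul_pow, h2N, hn p]
              have hαp := (hαpos p).ne'
              have hNne := hNR.ne'
              field_simp
            rw [hcsum]
            have hK0 : 0 ≤ K := by
              rw [hKprod]; positivity
            exact mul_le_mul_of_nonneg_left (Real.exp_le_exp.mpr (hbound g)) hK0
    -- assemble
    calc ∑ q : Conf S n × Conf S n, G q g
        = (∑ q : Conf S n × Conf S n,
            exp (∑ p, c p * ∑ i : Fin (n p), spin (q.1 p i) * spin (q.2 p i))) * W := by
          rw [Finset.sum_mul]
          exact Finset.sum_congr rfl fun q _ => hG_eq q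
      _ = K * (∏ p, (exp (c p) + exp (-(c p)))^(n p)) * W := by rw [hpair]
      _ ≤ K * (K * exp (lam * ∑ s, (g s)^2)) * W := by
          have hK0 : 0 ≤ K := Nat.cast_nonneg _
          exact mul_le_mul_of_nonneg_right (mul_le_mul_of_nonneg_left hprodle hK0) hWnn
      _ = K^2 * ∏ s, exp (lam * (g s)^2) * gaussianPDFReal 0 1 (g s) := by
          rw [Finset.prod_mul_distrib, ← hWdef, ← Real.exp_sum, ← Finset.mul_sum]
          ring
  -- integrate
  have hLHS : ∑ q : Conf S n × Conf S n,
      exp ((N:ℝ) * quadForm (Dmat α Δsq) (overlap n q.1 q.2) (overlap n q.1 q.2))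
      = ∫ g : Fin S → ℝ, ∑ q : Conf S n × Conf S n, G q g := by
    rw [MeasureTheory.integral_finset_sum Finset.univ (fun q _ => hGint q)]
    exact Finset.sum_congr rfl fun q _ => (hGval q).symm
  rw [hLHS]
  have hRint : Integrable (fun g : Fin S → ℝ =>
      K^2 * ∏ s, exp (lam * (g s)^2) * gaussianPDFReal 0 1 (g s)) :=
    (Integrable.fintype_prod (fun _ : Fin S => integrable_exp_sq_pdf lam hlam)).const_mul _
  have hmono := MeasureTheory.integral_mono_of_nonneg
    (g := fun g : Fin S → ℝ => K^2 * ∏ s, exp (lam * (g s)^2) * gaussianPDFReal 0 1 (g s))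
    (Filter.Eventually.of_forall fun g => Finset.sum_nonneg fun q _ =>
      Finset.prod_nonneg fun s _ =>
        mul_nonneg (Real.exp_nonneg _) (gaussianPDFReal_nonneg _ _ _))
    hRint (Filter.Eventually.of_forall key)
  refine hmono.trans ?_
  rw [MeasureTheory.integral_const_mul,
    MeasureTheory.integral_fintype_prod_volume_eq_prod
      (fun _ x => exp (lam * x^2) * gaussianPDFReal 0 1 x),
    Finset.prod_const, Finset.card_univ, Fintype.card_fin]


/-- The index type for the disorder family. -/
abbrev DIdx (S : ℕ) := Unit × (Fin S × Fin S) × ℕ × ℕ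

lemma disorder_mgf {Ω : Type} [MeasurableSpace Ω] (μ : Measure Ω) [IsProbabilityMeasure μ]
    (Δsq : Fin S → Fin S → ℝ) (hΔnn : ∀ s p, 0 ≤ Δsq s p)
    (J : Fin S → Fin S → ℕ → ℕ → Ω → ℝ) (hJ : IsDisorder μ Δsq J)
    (T : Finset (DIdx S)) (t : DIdx S → ℝ) :
    Integrable (fun ω => exp (∑ k ∈ T, t k * J k.2.1.1 k.2.1.2 k.2.2.1 k.2.2.2 ω)) μ ∧
    ∫ ω, exp (∑ k ∈ T, t k * J k.2.1.1 k.2.1.2 k.2.2.1 k.2.2.2 ω) ∂μ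
      = exp (∑ k ∈ T, Δsq k.2.1.1 k.2.1.2 * t k ^ 2 / 2) := by
  obtain ⟨hmeas, hindep, hmap⟩ := hJ
  set Jf : DIdx S → Ω → ℝ := fun k => J k.2.1.1 k.2.1.2 k.2.2.1 k.2.2.2 with hJf
  set X : DIdx S → Ω → ℝ := fun k ω => t k * Jf k ω with hX
  have hJfmeas : ∀ k, Measurable (Jf k) := fun k => hmeas () _ _ _ _
  have hJfmap : ∀ k : DIdx S, μ.map (Jf k) = gaussianReal 0 (Δsq k.2.1.1 k.2.1.2).toNNReal :=
    fun k => hmap () _ _ _ _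
  have hXindep : iIndepFun X μ := by
    have := hindep.comp (fun k (x : ℝ) => t k * x) (fun k => measurable_id.const_mul (t k))
    exact this
  have hXmeas : ∀ k, Measurable (X k) := fun k => (hJfmeas k).const_mul (t k)
  have hint : ∀ k : DIdx S, Integrable (fun ω => exp (1 * X k ω)) μ := by
    intro k
    simp only [one_mul, hX]
    have h1 : Integrable (fun x => exp (t k * x)) (μ.map (Jf k)) := by
      rw [hJfmap k]; exact integrable_exp_mul_gaussianReal _ _
    exact (integrable_map_measure
      (Real.continuous_exp.comp (continuous_const.mul continuous_id)).aestronglyMeasurable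
      (hJfmeas k).aemeasurable).mp h1
  have hmgf : ∀ k : DIdx S, mgf (X k) μ 1 = exp (Δsq k.2.1.1 k.2.1.2 * t k ^ 2 / 2) := by
    intro k
    rw [mgf]
    simp only [one_mul, hX]
    rw [← MeasureTheory.integral_map (hJfmeas k).aemeasurable
      (f := fun x => exp (t k * x))
      (Real.continuous_exp.comp (continuous_const.mul continuous_id)).aestronglyMeasurable,
      hJfmap k, integral_exp_mul_gaussianReal]
    rw [Real.coe_toNNReal _ (hΔnn _ _)]
  have hsum_eq : ∀ ω, (∑ k ∈ T, t k * Jf k ω) = (∑ k ∈ T, X k) ω := by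
    intro ω; rw [Finset.sum_apply]
  constructor
  · have := hindep -- keep
    have hI := iIndepFun.integrable_exp_mul_sum hXindep hXmeas (s := T) (fun k _ => hint k)
    refine hI.congr ?_
    filter_upwards with ω
    rw [← hsum_eq ω]
    simp [hJf]
  · have hM := iIndepFun.mgf_sum hXindep hXmeas T (t := 1)
    rw [mgf] at hM
    simp only [one_mul] at hM
    calc ∫ ω, exp (∑ k ∈ T, t k * Jf k ω) ∂μ
        = ∫ ω, exp ((∑ k ∈ T, X k) ω) ∂μ := by
          congr 1; funext ω; rw [hsum_eq ω]
      _ = ∏ k ∈ T, mgf (X k) μ 1 := hM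
      _ = exp (∑ k ∈ T, Δsq k.2.1.1 k.2.1.2 * t k ^ 2 / 2) := by
          rw [Finset.prod_congr rfl fun k _ => hmgf k, ← Real.exp_sum]


/-- Extended spin: zero outside the block. -/
def espin (Ns : Fin S → ℕ) (σ : Conf S Ns) (s : Fin S) (i : ℕ) : ℝ :=
  if h : i < Ns s then spin (σ s ⟨i, h⟩) else 0

def coef (N : ℕ) (Ns : Fin S → ℕ) (σ : Conf S Ns) (k : DIdx S) : ℝ :=
  (1 / Real.sqrt N) * (espin Ns σ k.2.1.1 k.2.2.1 * espin Ns σ k.2.1.2 k.2.2.2)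

def TT (S N : ℕ) : Finset (DIdx S) :=
  (Finset.univ : Finset Unit) ×ˢ ((Finset.univ : Finset (Fin S × Fin S))
    ×ˢ (Finset.range N ×ˢ Finset.range N))

lemma sum_TT (N : ℕ) (F : DIdx S → ℝ) :
    ∑ k ∈ TT S N, F k
      = ∑ s : Fin S, ∑ p : Fin S, ∑ i ∈ Finset.range N, ∑ j ∈ Finset.range N,
          F ((), (s, p), (i, j)) := by
  rw [TT]
  simp only [Finset.sum_product, Fintype.sum_prod_type, Finset.univ_unique,
    Finset.sum_singleton]

lemma espin_apply (Ns : Fin S → ℕ) (σ : Conf S Ns) (s : Fin S) (i : Fin (Ns s)) :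
    espin Ns σ s (i : ℕ) = spin (σ s i) := by
  rw [espin, dif_pos i.isLt]

lemma espin_sum (Ns : Fin S → ℕ) (σ : Conf S Ns) (s : Fin S) {N : ℕ} (hle : Ns s ≤ N)
    (f : ℕ → ℝ) :
    ∑ i ∈ Finset.range N, espin Ns σ s i * f i
      = ∑ i : Fin (Ns s), spin (σ s i) * f i := by
  have h1 : ∑ i ∈ Finset.range (Ns s), espin Ns σ s i * f i
      = ∑ i ∈ Finset.range N, espin Ns σ s i * f i := by
    refine Finset.sum_subset (Finset.range_subset_range.mpr hle) ?_
    intro i _ hi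
    rw [Finset.mem_range, not_lt] at hi
    rw [espin, dif_neg (by omega), zero_mul]
  rw [← h1, ← Fin.sum_univ_eq_sum_range (fun i => espin Ns σ s i * f i) (Ns s)]
  exact Finset.sum_congr rfl fun i _ => by rw [espin_apply]

lemma espin_sum2 (Ns : Fin S → ℕ) (σ τ : Conf S Ns) (s : Fin S) {N : ℕ} (hle : Ns s ≤ N) :
    ∑ i ∈ Finset.range N, espin Ns σ s i * espin Ns τ s i
      = ∑ i : Fin (Ns s), spin (σ s i) * spin (τ s i) := by
  rw [espin_sum Ns σ s hle (fun i => espin Ns τ s i)]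
  exact Finset.sum_congr rfl fun i _ => by rw [espin_apply]

/-- Cross coefficient sum: the key quadratic identity. -/
lemma coef_cross_sum (N : ℕ) (Ns : Fin S → ℕ) (α : Fin S → ℝ) (Δsq : Fin S → Fin S → ℝ)
    (hle : ∀ s, Ns s ≤ N) (hNR : (0:ℝ) < N) (hn : ∀ s, (Ns s : ℝ) = α s * N)
    (hnpos : ∀ s, (0:ℝ) < (Ns s : ℝ)) (σ τ : Conf S Ns) :
    ∑ k ∈ TT S N, Δsq k.2.1.1 k.2.1.2 * (coef N Ns σ k * coef N Ns τ k)
      = (N:ℝ) * quadForm (Dmat α Δsq) (overlap Ns σ τ) (overlap Ns σ τ) := by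
  rw [sum_TT]
  rw [quadForm, Finset.mul_sum]
  refine Finset.sum_congr rfl fun s _ => ?_
  rw [Finset.mul_sum]
  refine Finset.sum_congr rfl fun p _ => ?_
  have hsq : (1 / Real.sqrt N) * (1 / Real.sqrt N) = 1 / N := by
    rw [div_mul_div_comm, one_mul, Real.mul_self_sqrt hNR.le]
  calc ∑ i ∈ Finset.range N, ∑ j ∈ Finset.range N,
        Δsq s p * (coef N Ns σ ((), (s,p), (i,j)) * coef N Ns τ ((), (s,p), (i,j)))
      = ∑ i ∈ Finset.range N, ∑ j ∈ Finset.range N,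
          (Δsq s p / N) * ((espin Ns σ s i * espin Ns τ s i)
            * (espin Ns σ p j * espin Ns τ p j)) := by
        refine Finset.sum_congr rfl fun i _ => Finset.sum_congr rfl fun j _ => ?_
        simp only [coef]
        rw [div_eq_mul_inv (Δsq s p) (N:ℝ), ← one_div, ← hsq]
        ring
    _ = (Δsq s p / N) * ((∑ i ∈ Finset.range N, espin Ns σ s i * espin Ns τ s i)
          * (∑ j ∈ Finset.range N, espin Ns σ p j * espin Ns τ p j)) := by
        rw [Finset.sum_mul_sum, Finset.mul_sum]
        refine Finset.sum_congr rfl fun i _ => ?_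
        rw [Finset.mul_sum]
    _ = (N:ℝ) * (overlap Ns σ τ s * Dmat α Δsq s p * overlap Ns σ τ p) := by
        rw [espin_sum2 Ns σ τ s (hle s), espin_sum2 Ns σ τ p (hle p)]
        have h1 : ∑ i : Fin (Ns s), spin (σ s i) * spin (τ s i)
            = (Ns s : ℝ) * overlap Ns σ τ s := by
          rw [overlap, ← mul_assoc, mul_one_div, div_self (hnpos s).ne', one_mul]
        have h2 : ∑ j : Fin (Ns p), spin (σ p j) * spin (τ p j)
            = (Ns p : ℝ) * overlap Ns σ τ p := by
          rw [overlap, ← mul_assoc, mul_one_div, div_self (hnpos p).ne', one_mul]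
        rw [h1, h2, hn s, hn p, Dmat]
        field_simp

lemma overlap_self (Ns : Fin S → ℕ) (hnpos : ∀ s, (0:ℝ) < (Ns s : ℝ)) (σ : Conf S Ns) :
    overlap Ns σ σ = fun _ => (1:ℝ) := by
  funext s
  rw [overlap]
  rw [Finset.sum_congr rfl fun i _ => spin_mul_self (σ s i)]
  rw [Finset.sum_const, Finset.card_univ, Fintype.card_fin, nsmul_eq_mul, mul_one,
    one_div, inv_mul_cancel₀ (hnpos s).ne']

/-- Representation of minus the Hamiltonian as a linear form in the couplings. -/
lemma ham_rep (N : ℕ) (Ns : Fin S → ℕ) (hle : ∀ s, Ns s ≤ N)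
    (J : Fin S → Fin S → ℕ → ℕ → ℝ) (σ : Conf S Ns) :
    ∑ k ∈ TT S N, coef N Ns σ k * J k.2.1.1 k.2.1.2 k.2.2.1 k.2.2.2
      = - hamiltonian N Ns J σ := by
  rw [sum_TT, hamiltonian, neg_mul, neg_neg, Finset.mul_sum]
  refine Finset.sum_congr rfl fun s _ => ?_
  rw [Finset.mul_sum]
  refine Finset.sum_congr rfl fun p _ => ?_
  calc ∑ i ∈ Finset.range N, ∑ j ∈ Finset.range N,
        coef N Ns σ ((), (s,p), (i,j)) * J s p i j
      = ∑ i ∈ Finset.range N, espin Ns σ s i *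
          (∑ j ∈ Finset.range N, espin Ns σ p j * ((1 / Real.sqrt N) * J s p i j)) := by
        refine Finset.sum_congr rfl fun i _ => ?_
        rw [Finset.mul_sum]
        refine Finset.sum_congr rfl fun j _ => ?_
        simp only [coef]
        ring
    _ = ∑ i : Fin (Ns s), spin (σ s i) *
          (∑ j ∈ Finset.range N, espin Ns σ p j * ((1 / Real.sqrt N) * J s p i j)) :=
        espin_sum Ns σ s (hle s) _
    _ = ∑ i : Fin (Ns s), spin (σ s i) *
          (∑ j : Fin (Ns p), spin (σ p j) * ((1 / Real.sqrt N) * J s p i j)) := by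
        refine Finset.sum_congr rfl fun i _ => ?_
        rw [espin_sum Ns σ p (hle p) (fun j => (1 / Real.sqrt N) * J s p i j)]
    _ = (1 / Real.sqrt N) * ∑ i : Fin (Ns s), ∑ j : Fin (Ns p),
          J s p i j * spin (σ s i) * spin (σ p j) := by
        rw [Finset.mul_sum]
        refine Finset.sum_congr rfl fun i _ => ?_
        rw [Finset.mul_sum, Finset.mul_sum]
        refine Finset.sum_congr rfl fun j _ => ?_
        ring


theorem second_moment_bounded
    {S : ℕ} (hS : 0 < S) (α : Fin S → ℝ) (Δsq : Fin S → Fin S → ℝ)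
    (hαpos : ∀ s, 0 < α s) (hαsum : ∑ s, α s = 1)
    (hΔnn : ∀ s p, 0 ≤ Δsq s p) (hΔsym : ∀ s p, Δsq s p = Δsq p s)
    {Ω : Type} [MeasurableSpace Ω] (μ : Measure Ω) [IsProbabilityMeasure μ]
    (J : Fin S → Fin S → ℕ → ℕ → Ω → ℝ) (hJ : IsDisorder μ Δsq J)
    (hpd : PosDefQ (Dmat α Δsq)) (hdet : 0 < (Matrix.of (Dmat α Δsq)).det)
    (hhat : PosDefQ (Dhat α Δsq)) :
    ∃ C : ℝ, ∀ N : ℕ, Admissible α N →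
      (∫ ω, (partitionFunction N (blockSize α N) (fun _ => 0)
              (fun s p i j => J s p i j ω)) ^ 2 ∂μ)
        ≤ C * (∫ ω, partitionFunction N (blockSize α N) (fun _ => 0)
              (fun s p i j => J s p i j ω) ∂μ) ^ 2 := by
  classical
  obtain ⟨C₀, hC₀⟩ := partB hS α Δsq hαpos hαsum hΔsym hpd hdet hhat
  refine ⟨C₀, ?_⟩
  intro N hadm
  set Ns : Fin S → ℕ := blockSize α N with hNsdef
  have hNpos : 0 < N := admissible_pos hS hadm
  have hNR : (0:ℝ) < N := by exact_mod_cast hNpos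
  have hn : ∀ s, (Ns s : ℝ) = α s * N := fun s => (hadm s).2
  have hnposR : ∀ s, (0:ℝ) < (Ns s : ℝ) := by
    intro s; exact_mod_cast (hadm s).1
  have hle : ∀ s, Ns s ≤ N := by
    intro s
    have hs1 : α s ≤ 1 := hαsum ▸ Finset.single_le_sum (fun t _ => (hαpos t).le)
      (Finset.mem_univ s)
    have : (Ns s : ℝ) ≤ (N : ℝ) := by
      rw [hn s]
      nlinarith
    exact_mod_cast this
  set Q : ℝ := quadForm (Dmat α Δsq) (fun _ => 1) (fun _ => 1) with hQdef
  set K : ℝ := (Fintype.card (Conf S Ns) : ℝ) with hKdef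
  have hdiag : ∀ σ : Conf S Ns,
      ∑ k ∈ TT S N, Δsq k.2.1.1 k.2.1.2 * (coef N Ns σ k * coef N Ns σ k)
        = (N:ℝ) * Q := by
    intro σ
    rw [coef_cross_sum N Ns α Δsq hle hNR hn hnposR σ σ, overlap_self Ns hnposR σ, hQdef]
  set Z : Ω → ℝ := fun ω => partitionFunction N Ns (fun _ => 0) (fun s p i j => J s p i j ω)
    with hZdef
  have hZ : ∀ ω, Z ω = ∑ σ : Conf S Ns,
      exp (∑ k ∈ TT S N, coef N Ns σ k * J k.2.1.1 k.2.1.2 k.2.2.1 k.2.2.2 ω) := by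
    intro ω
    rw [hZdef]
    simp only [partitionFunction]
    refine Finset.sum_congr rfl fun σ _ => ?_
    rw [ham_rep N Ns hle (fun s p i j => J s p i j ω) σ]
    congr 1
    simp [fieldTerm]
  -- first moment
  have hEZ : ∫ ω, Z ω ∂μ = K * exp ((N:ℝ) * Q / 2) := by
    have h1 : ∫ ω, Z ω ∂μ = ∑ σ : Conf S Ns, ∫ ω,
        exp (∑ k ∈ TT S N, coef N Ns σ k * J k.2.1.1 k.2.1.2 k.2.2.1 k.2.2.2 ω) ∂μ := by
      rw [integral_congr_ae (Eventually.of_forall hZ)]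
      exact integral_finset_sum Finset.univ fun σ _ =>
        (disorder_mgf μ Δsq hΔnn J hJ (TT S N) (coef N Ns σ)).1
    rw [h1]
    have h2 : ∀ σ : Conf S Ns, ∫ ω,
        exp (∑ k ∈ TT S N, coef N Ns σ k * J k.2.1.1 k.2.1.2 k.2.2.1 k.2.2.2 ω) ∂μ
        = exp ((N:ℝ) * Q / 2) := by
      intro σ
      rw [(disorder_mgf μ Δsq hΔnn J hJ (TT S N) (coef N Ns σ)).2]
      congr 1
      rw [← hdiag σ, Finset.sum_div]
      exact Finset.sum_congr rfl fun k _ => by ring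
    rw [Finset.sum_congr rfl fun σ _ => h2 σ, Finset.sum_const, Finset.card_univ,
      nsmul_eq_mul, hKdef]
  -- second moment
  have hEZ2 : ∫ ω, (Z ω)^2 ∂μ
      = exp ((N:ℝ) * Q) * ∑ q : Conf S Ns × Conf S Ns,
          exp ((N:ℝ) * quadForm (Dmat α Δsq) (overlap Ns q.1 q.2) (overlap Ns q.1 q.2)) := by
    have hZ2 : ∀ ω, (Z ω)^2 = ∑ q : Conf S Ns × Conf S Ns,
        exp (∑ k ∈ TT S N, (coef N Ns q.1 k + coef N Ns q.2 k)
          * J k.2.1.1 k.2.1.2 k.2.2.1 k.2.2.2 ω) := by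
      intro ω
      rw [hZ ω, sq, Finset.sum_mul_sum, Fintype.sum_prod_type]
      refine Finset.sum_congr rfl fun σ _ => Finset.sum_congr rfl fun τ _ => ?_
      rw [← Real.exp_add, ← Finset.sum_add_distrib]
      congr 1
      exact Finset.sum_congr rfl fun k _ => by ring
    have h1 : ∫ ω, (Z ω)^2 ∂μ = ∑ q : Conf S Ns × Conf S Ns, ∫ ω,
        exp (∑ k ∈ TT S N, (coef N Ns q.1 k + coef N Ns q.2 k)
          * J k.2.1.1 k.2.1.2 k.2.2.1 k.2.2.2 ω) ∂μ := by
      rw [integral_congr_ae (Eventually.of_forall hZ2)]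
      exact integral_finset_sum Finset.univ fun q _ =>
        (disorder_mgf μ Δsq hΔnn J hJ (TT S N) (fun k => coef N Ns q.1 k + coef N Ns q.2 k)).1
    rw [h1, Finset.mul_sum]
    refine Finset.sum_congr rfl fun q _ => ?_
    rw [(disorder_mgf μ Δsq hΔnn J hJ (TT S N)
      (fun k => coef N Ns q.1 k + coef N Ns q.2 k)).2, ← Real.exp_add]
    congr 1
    have hexp : ∑ k ∈ TT S N, Δsq k.2.1.1 k.2.1.2
        * (coef N Ns q.1 k + coef N Ns q.2 k) ^ 2 / 2
        = (∑ k ∈ TT S N, Δsq k.2.1.1 k.2.1.2 * (coef N Ns q.1 k * coef N Ns q.1 k)) / 2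
          + (∑ k ∈ TT S N, Δsq k.2.1.1 k.2.1.2 * (coef N Ns q.2 k * coef N Ns q.2 k)) / 2
          + ∑ k ∈ TT S N, Δsq k.2.1.1 k.2.1.2 * (coef N Ns q.1 k * coef N Ns q.2 k) := by
      rw [Finset.sum_div, Finset.sum_div, ← Finset.sum_add_distrib, ← Finset.sum_add_distrib]
      exact Finset.sum_congr rfl fun k _ => by ring
    rw [hexp, hdiag q.1, hdiag q.2, coef_cross_sum N Ns α Δsq hle hNR hn hnposR q.1 q.2]
    ring
  -- conclusion
  have hfinal := hC₀ N hadm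
  calc ∫ ω, (Z ω)^2 ∂μ
      = exp ((N:ℝ) * Q) * ∑ q : Conf S Ns × Conf S Ns,
          exp ((N:ℝ) * quadForm (Dmat α Δsq) (overlap Ns q.1 q.2) (overlap Ns q.1 q.2)) :=
        hEZ2
    _ ≤ exp ((N:ℝ) * Q) * (K^2 * C₀) := by
        refine mul_le_mul_of_nonneg_left ?_ (Real.exp_nonneg _)
        exact hfinal
    _ = C₀ * (K * exp ((N:ℝ) * Q / 2))^2 := by
        rw [mul_pow, sq (exp ((N:ℝ) * Q / 2)), ← Real.exp_add]
        ring_nf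
    _ = C₀ * (∫ ω, Z ω ∂μ)^2 := by rw [hEZ]


end MSSK
end
end

section
/- Let γ : [0,1] → [0,1]^S be a continuous, piecewise continuously differentiable path, nondecreasing in each coordinate, with γ(0) = q_0 = 0, γ(1) = q_K = 1, and passing through every point q_l (0 ≤ l ≤ K). Then the line integral of the functional order parameter against the gradient of the quadratic form satisfies ∫₀¹ x(γ(t)) · (d/dt)(γ(t), 𝚫 γ(t)) dt = Σ_{l=0}^{K} (m_{l+1} − m_l) [ (1, 𝚫 1) − (q_l, 𝚫 q_l) ]; equivalently, −(1/2)(1, 𝚫 1) + (1/2) Σ_{l=0}^{K} (m_{l+1} − m_l)(q_l, 𝚫 q_l) = −(1/2) ∫_γ x(u) ∇_u(u, 𝚫 u) · du. -/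
open MeasureTheory ProbabilityTheory Real Filter

noncomputable section

namespace MSSK

/-- The ziggurat functional order parameter
x(u) = Σ_{l=0}^{K} (m_{l+1} − m_l) Π_s θ(u_s − q_l^{(s)}). -/
def ziggurat {S : ℕ} (K : ℕ) (m : ℕ → ℝ) (q : ℕ → Fin S → ℝ) (u : Fin S → ℝ) : ℝ :=
  ∑ l ∈ Finset.range (K + 1),
    (m (l + 1) - m l) * ∏ s, (if q l s ≤ u s then (1 : ℝ) else 0)

theorem ziggurat_line_integral
    {S : ℕ} (hS : 0 < S) (M : Fin S → Fin S → ℝ)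
    (hMsym : ∀ s p, M s p = M p s) (hMpsd : PosSemidefQ M)
    (K : ℕ) (hK : 1 ≤ K) (m : ℕ → ℝ) (q : ℕ → Fin S → ℝ)
    (hm0 : m 0 = 0) (hmK : m (K + 1) = 1) (hmono : ∀ l ≤ K, m l ≤ m (l + 1))
    (hq0 : ∀ s, q 0 s = 0) (hqK : ∀ s, q K s = 1)
    (hqmono : ∀ l < K, ∀ s, q l s ≤ q (l + 1) s)
    (γ γ' : ℝ → Fin S → ℝ) (F : Finset ℝ)
    (hcont : ContinuousOn γ (Set.Icc 0 1))
    (hderiv : ∀ t ∈ Set.Ioo (0 : ℝ) 1 \ (F : Set ℝ), HasDerivAt γ (γ' t) t)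
    (hγmono : ∀ s, MonotoneOn (fun t => γ t s) (Set.Icc 0 1))
    (hstart : γ 0 = q 0) (hend : γ 1 = q K)
    (hpass : ∀ l ≤ K, ∃ t ∈ Set.Icc (0 : ℝ) 1, γ t = q l)
    (hint : IntervalIntegrable
      (fun t => quadForm M (γ' t) (γ t) + quadForm M (γ t) (γ' t))
      MeasureTheory.volume 0 1) :
    (∫ t in (0 : ℝ)..1,
        ziggurat K m q (γ t) * (quadForm M (γ' t) (γ t) + quadForm M (γ t) (γ' t)))
      = ∑ l ∈ Finset.range (K + 1), (m (l + 1) - m l) *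
          (quadForm M (fun _ => 1) (fun _ => 1) - quadForm M (q l) (q l)) ∧
    -(1 / 2) * quadForm M (fun _ => 1) (fun _ => 1)
      + (1 / 2) * ∑ l ∈ Finset.range (K + 1), (m (l + 1) - m l) * quadForm M (q l) (q l)
      = -(1 / 2) * ∫ t in (0 : ℝ)..1,
          ziggurat K m q (γ t) * (quadForm M (γ' t) (γ t) + quadForm M (γ t) (γ' t)) := by
  classical
  set Q1 : ℝ := quadForm M (fun _ => 1) (fun _ => 1) with hQ1
  set gg : ℝ → ℝ := fun t => quadForm M (γ t) (γ t) with hgg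
  set gg' : ℝ → ℝ := fun t => quadForm M (γ' t) (γ t) + quadForm M (γ t) (γ' t) with hgg'
  have hgg'app : ∀ t, quadForm M (γ' t) (γ t) + quadForm M (γ t) (γ' t) = gg' t :=
    fun _ => rfl
  have hint' : IntervalIntegrable gg' volume 0 1 := hint
  -- continuity of gg on [0,1]
  have hQcont : Continuous (fun v : Fin S → ℝ => quadForm M v v) := by
    unfold quadForm
    exact continuous_finset_sum _ fun s _ => continuous_finset_sum _ fun p _ =>
      (((continuous_apply s).mul continuous_const).mul (continuous_apply p))
  have hggcont : ContinuousOn gg (Set.Icc 0 1) := hQcont.comp_continuousOn hcont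
  -- derivative of gg
  have hggderiv : ∀ t ∈ Set.Ioo (0 : ℝ) 1 \ (F : Set ℝ), HasDerivAt gg (gg' t) t := by
    intro t ht
    have hds : ∀ s, HasDerivAt (fun u => γ u s) (γ' t s) t :=
      fun s => hasDerivAt_pi.mp (hderiv t ht) s
    have h1 : HasDerivAt (fun u => ∑ s, ∑ p, γ u s * M s p * γ u p)
        (∑ s, ∑ p, (γ' t s * M s p * γ t p + γ t s * M s p * γ' t p)) t :=
      HasDerivAt.fun_sum fun s _ => HasDerivAt.fun_sum fun p _ =>
        ((hds s).mul_const (M s p)).mul (hds p)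
    have h2 : gg' t = ∑ s, ∑ p, (γ' t s * M s p * γ t p + γ t s * M s p * γ' t p) := by
      simp [hgg', quadForm, Finset.sum_add_distrib]
    rw [h2]
    exact h1
  -- FTC
  have key : ∀ a ∈ Set.Icc (0:ℝ) 1, ∫ t in a..1, gg' t = gg 1 - gg a := by
    intro a ha
    apply MeasureTheory.integral_eq_of_hasDerivAt_off_countable_of_le gg gg' ha.2
      F.countable_toSet (hggcont.mono (Set.Icc_subset_Icc ha.1 le_rfl))
    · intro x hx
      exact hggderiv x ⟨Set.Ioo_subset_Ioo ha.1 le_rfl hx.1, hx.2⟩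
    · apply hint'.mono_set
      rw [Set.uIcc_of_le ha.2, Set.uIcc_of_le zero_le_one]
      exact Set.Icc_subset_Icc ha.1 le_rfl
  -- per-level analysis
  have main : ∀ l ≤ K,
      IntervalIntegrable (fun t => (∏ s, (if q l s ≤ γ t s then (1:ℝ) else 0)) * gg' t)
        volume 0 1 ∧
      (∫ t in (0:ℝ)..1, (∏ s, (if q l s ≤ γ t s then (1:ℝ) else 0)) * gg' t)
        = Q1 - quadForm M (q l) (q l) := by
    intro l hl
    obtain ⟨tl, htl, hγtl⟩ := hpass l hl
    set B : Set ℝ := {t | t ∈ Set.Icc (0:ℝ) 1 ∧ ∀ s, q l s ≤ γ t s} with hB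
    have htlB : tl ∈ B := ⟨htl, fun s => by rw [← hγtl]⟩
    set b : ℝ := sInf B with hb
    -- the a.e. identity
    have hae : ∀ᵐ t ∂(volume : Measure ℝ), t ∈ Set.uIoc (0:ℝ) 1 →
        (∏ s, (if q l s ≤ γ t s then (1:ℝ) else 0)) * gg' t
          = Set.indicator (Set.Ioc tl 1) gg' t := by
      have hnull : (volume : Measure ℝ) ((F : Set ℝ) ∪ {b, tl, (1:ℝ)}) = 0 :=
        (F.finite_toSet.union (Set.toFinite _)).measure_zero _
      filter_upwards [measure_eq_zero_iff_ae_notMem.mp hnull] with t ht hmem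
      rw [Set.uIoc_of_le zero_le_one] at hmem
      simp only [Set.mem_union, Set.mem_insert_iff, Set.mem_singleton_iff, not_or] at ht
      obtain ⟨htF, htb, httl, ht1⟩ := ht
      have htIoo : t ∈ Set.Ioo (0:ℝ) 1 := ⟨hmem.1, lt_of_le_of_ne hmem.2 ht1⟩
      have htIcc : t ∈ Set.Icc (0:ℝ) 1 := ⟨le_of_lt htIoo.1, le_of_lt htIoo.2⟩
      rcases lt_or_gt_of_ne httl with hlt | hgt
      · -- t < tl : both sides are zero a.e.
        have hind : Set.indicator (Set.Ioc tl 1) gg' t = 0 :=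
          Set.indicator_of_notMem (fun hc => absurd hc.1 (not_lt.mpr (le_of_lt hlt))) _
        rw [hind]
        by_cases hall : ∀ s, q l s ≤ γ t s
        · -- then γ is locally constant near t, so gg' t = 0
          have htB : t ∈ B := ⟨htIcc, hall⟩
          have hblt : b < t := lt_of_le_of_ne (csInf_le ⟨0, fun x hx => hx.1.1⟩ htB)
            (Ne.symm htb)
          obtain ⟨t', ht'B, ht'lt⟩ := exists_lt_of_csInf_lt ⟨t, htB⟩ hblt
          have hconst : ∀ u ∈ Set.Ioo t' tl, γ u = q l := by
            intro u hu
            have huIcc : u ∈ Set.Icc (0:ℝ) 1 :=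
              ⟨le_trans ht'B.1.1 (le_of_lt hu.1), le_trans (le_of_lt hu.2) htl.2⟩
            funext s
            refine le_antisymm ?_ ?_
            · exact le_of_le_of_eq (hγmono s huIcc htl (le_of_lt hu.2)) (congrFun hγtl s)
            · exact le_trans (ht'B.2 s) (hγmono s ht'B.1 huIcc (le_of_lt hu.1))
          have hEq : γ =ᶠ[nhds t] fun _ => q l :=
            Filter.eventuallyEq_of_mem (Ioo_mem_nhds ht'lt hlt) hconst
          have hzero : γ' t = 0 :=
            (hderiv t ⟨htIoo, htF⟩).unique
              ((hasDerivAt_const t (q l)).congr_of_eventuallyEq hEq)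
          have : gg' t = 0 := by simp [hgg', quadForm, hzero]
          rw [this, mul_zero]
        · push_neg at hall
          obtain ⟨s0, hs0⟩ := hall
          have hz : (if q l s0 ≤ γ t s0 then (1:ℝ) else 0) = 0 := if_neg (not_le.mpr hs0)
          rw [Finset.prod_eq_zero (Finset.mem_univ s0) hz, zero_mul]
      · -- t > tl : indicator is 1
        have hone : ∀ s, (if q l s ≤ γ t s then (1:ℝ) else 0) = 1 := by
          intro s
          have : γ tl s ≤ γ t s := hγmono s htl htIcc (le_of_lt hgt)
          rw [hγtl] at this
          exact if_pos this
        rw [Finset.prod_congr rfl (fun s _ => hone s), Finset.prod_const_one, one_mul,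
          Set.indicator_of_mem (Set.mem_Ioc.mpr ⟨hgt, le_of_lt htIoo.2⟩)]
    -- integrability of the indicator version
    have hindint : IntervalIntegrable (Set.indicator (Set.Ioc tl 1) gg') volume 0 1 := by
      rw [intervalIntegrable_iff_integrableOn_Ioc_of_le zero_le_one] at hint' ⊢
      exact hint'.indicator measurableSet_Ioc
    have haerestrict :
        (fun t => Set.indicator (Set.Ioc tl 1) gg' t)
          =ᵐ[volume.restrict (Set.Ioc (0:ℝ) 1)]
        (fun t => (∏ s, (if q l s ≤ γ t s then (1:ℝ) else 0)) * gg' t) := by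
      refine (ae_restrict_iff' measurableSet_Ioc).mpr ?_
      filter_upwards [hae] with t h1 h2
      exact (h1 (by rwa [Set.uIoc_of_le zero_le_one])).symm
    have hflint : IntervalIntegrable
        (fun t => (∏ s, (if q l s ≤ γ t s then (1:ℝ) else 0)) * gg' t) volume 0 1 := by
      rw [intervalIntegrable_iff_integrableOn_Ioc_of_le zero_le_one] at hindint ⊢
      exact hindint.congr haerestrict
    refine ⟨hflint, ?_⟩
    rw [intervalIntegral.integral_congr_ae hae]
    have : ∫ t in (0:ℝ)..1, Set.indicator (Set.Ioc tl 1) gg' t = ∫ t in tl..1, gg' t := by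
      rw [intervalIntegral.integral_of_le zero_le_one,
        intervalIntegral.integral_of_le htl.2,
        MeasureTheory.setIntegral_indicator measurableSet_Ioc,
        Set.Ioc_inter_Ioc, max_eq_right htl.1, min_self]
    rw [this, key tl htl]
    have h1 : gg 1 = Q1 := by
      have hone : γ 1 = fun _ => (1:ℝ) := by funext s; rw [hend]; exact hqK s
      show quadForm M (γ 1) (γ 1) = Q1
      rw [hone]
    have h2 : gg tl = quadForm M (q l) (q l) := by
      show quadForm M (γ tl) (γ tl) = quadForm M (q l) (q l)
      rw [hγtl]
    rw [h1, h2]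
  -- assemble
  have hfirst : (∫ t in (0 : ℝ)..1,
        ziggurat K m q (γ t) * (quadForm M (γ' t) (γ t) + quadForm M (γ t) (γ' t)))
      = ∑ l ∈ Finset.range (K + 1), (m (l + 1) - m l) * (Q1 - quadForm M (q l) (q l)) := by
    have hzig : ∀ t, ziggurat K m q (γ t) * gg' t
        = ∑ l ∈ Finset.range (K + 1),
            (m (l + 1) - m l) * ((∏ s, (if q l s ≤ γ t s then (1:ℝ) else 0)) * gg' t) := by
      intro t
      rw [ziggurat, Finset.sum_mul]
      exact Finset.sum_congr rfl fun l _ => by ring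
    simp only [hgg'app, hzig]
    rw [intervalIntegral.integral_finset_sum
      (fun l hl => ((main l (Nat.lt_succ_iff.mp (Finset.mem_range.mp hl))).1).const_mul _)]
    exact Finset.sum_congr rfl fun l hl => by
      rw [intervalIntegral.integral_const_mul,
        (main l (Nat.lt_succ_iff.mp (Finset.mem_range.mp hl))).2]
  refine ⟨hfirst, ?_⟩
  rw [hfirst]
  have hsum1 : ∑ l ∈ Finset.range (K + 1), (m (l + 1) - m l) = 1 := by
    rw [Finset.sum_range_sub m (K + 1), hmK, hm0, sub_zero]
  have : ∑ l ∈ Finset.range (K + 1), (m (l + 1) - m l) * (Q1 - quadForm M (q l) (q l))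
      = Q1 - ∑ l ∈ Finset.range (K + 1), (m (l + 1) - m l) * quadForm M (q l) (q l) := by
    simp only [mul_sub]
    rw [Finset.sum_sub_distrib, ← Finset.sum_mul, hsum1, one_mul]
  rw [this]
  ring

end MSSK
end
end
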